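/- arXiv:1111.4709 — 2 statements merged into one kernel-verified Lean document; each statement's English description precedes it below -/
import Mathlib

section
/- Let 𝒱 and 𝒲 be reduced cyclic words and (P,Q) ∈ 𝕃ℙ₂(𝒱,𝒲). Then (Q,P) ∈ 𝕃ℙ₂(𝒲,𝒱) and γ(P,Q) = γ(Q,P). -/
open List

namespace CyclicWords

/-- A letter of the alphabet `𝔸ₙ = {a₁,…,aₙ, ā₁,…,āₙ}`: a generator index together
with a Boolean recording whether the letter is barred. -/
abbrev Letter (n : ℕ) := Bool × Fin n

/-- The involution `x ↦ x̄` on letters. -/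
def Letter.bar {n : ℕ} (x : Letter n) : Letter n := (!x.1, x.2)

/-- A linear word: a finite sequence of letters. -/
abbrev Word (n : ℕ) := List (Letter n)

/-- `W̄ = x̄ₘ ⋯ x̄₁ x̄₀` for `W = x₀x₁⋯xₘ`. -/
def Word.bar {n : ℕ} (W : Word n) : Word n := (W.map Letter.bar).reverse

/-- `Wᵏ`, the concatenation of `k` copies of `W`. -/
def wpow {n : ℕ} (W : Word n) (k : ℕ) : Word n := (List.replicate k W).flatten

/-- A linear word is freely reduced when consecutive letters are never inverse
to each other. -/
def FreelyReduced {n : ℕ} (W : Word n) : Prop :=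
  W.Chain' (fun a b => b ≠ Letter.bar a)

/-- A cyclic word: an equivalence class of linear words under cyclic rotation. -/
abbrev CWord (n : ℕ) := Cycle (Letter n)

/-- `c(W)`, the cyclic word represented by the linear word `W`. -/
def cyc {n : ℕ} (W : Word n) : CWord n := ↑W

/-- The length of a cyclic word. -/
def clen {n : ℕ} (𝒲 : CWord n) : ℕ := 𝒲.length

/-- A cyclic word is reduced if it is non-empty and all of its linear
representatives are freely reduced. -/
def CReduced {n : ℕ} (𝒲 : CWord n) : Prop :=
  𝒲 ≠ Cycle.nil ∧ ∀ W : Word n, cyc W = 𝒲 → FreelyReduced W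

/-- `P` is a (linear) subword of the cyclic word `𝒲`, i.e. a linear subword of
one of its linear representatives. -/
def Subword {n : ℕ} (P : Word n) (𝒲 : CWord n) : Prop :=
  ∃ W : Word n, cyc W = 𝒲 ∧ P <:+: W

/-- `P` is a subword of the power `𝒲ʲ`. -/
def SubwordPow {n : ℕ} (P : Word n) (𝒲 : CWord n) (j : ℕ) : Prop :=
  ∃ W : Word n, cyc W = 𝒲 ∧ P <:+: wpow W j

/-- A surface symbol: a reduced cyclic word in which every letter of `𝔸ₙ`
appears exactly once. -/
def SurfaceSymbol {n : ℕ} (𝒪 : CWord n) : Prop :=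
  CReduced 𝒪 ∧ ∃ O : Word n, cyc O = 𝒪 ∧ O.Nodup ∧ ∀ x : Letter n, x ∈ O

/-- `𝒲` is reduced and its (distinct) letters embed into `𝒪` preserving the
cyclic order. -/
def OrientPos {n : ℕ} (𝒪 𝒲 : CWord n) : Prop :=
  CReduced 𝒲 ∧ ∃ W O : Word n, cyc W = 𝒲 ∧ cyc O = 𝒪 ∧ W.Sublist O

/-- `𝒲` is reduced and its (distinct) letters embed into `𝒪` reversing the
cyclic order. -/
def OrientNeg {n : ℕ} (𝒪 𝒲 : CWord n) : Prop :=
  CReduced 𝒲 ∧ ∃ W O : Word n, cyc W = 𝒲 ∧ cyc O = 𝒪 ∧ W.Sublist O.reverse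

open Classical in
/-- The number `o(𝒲) ∈ {-1,0,1}` associated to a cyclic word `𝒲`. -/
noncomputable def o {n : ℕ} (𝒪 𝒲 : CWord n) : ℤ :=
  if OrientPos 𝒪 𝒲 then 1 else if OrientNeg 𝒪 𝒲 then -1 else 0

/-- Condition (1) of the definition of `𝒪`-linked pairs. -/
def LinkedType1 {n : ℕ} (𝒪 : CWord n) (P Q : Word n) : Prop :=
  ∃ p₁ p₂ q₁ q₂ : Letter n, P = [p₁, p₂] ∧ Q = [q₁, q₂] ∧
    o 𝒪 (cyc [Letter.bar p₁, Letter.bar q₁, p₂, q₂]) ≠ 0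

/-- Condition (2) of the definition of `𝒪`-linked pairs (`x₁`, `x₂` denote the
first and last letters of `Y`). -/
def LinkedType2 {n : ℕ} (𝒪 : CWord n) (P Q : Word n) : Prop :=
  ∃ (p₁ p₂ q₁ q₂ : Letter n) (Y : Word n), Y ≠ [] ∧
    P = p₁ :: Y ++ [p₂] ∧ Q = q₁ :: Y ++ [q₂] ∧ p₁ ≠ q₁ ∧ p₂ ≠ q₂ ∧
    ∀ x₁ x₂ : Letter n, Y.head? = some x₁ → Y.getLast? = some x₂ →
      o 𝒪 (cyc [Letter.bar p₁, Letter.bar q₁, x₁]) = o 𝒪 (cyc [p₂, q₂, Letter.bar x₂])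

/-- Condition (3) of the definition of `𝒪`-linked pairs. -/
def LinkedType3 {n : ℕ} (𝒪 : CWord n) (P Q : Word n) : Prop :=
  ∃ (p₁ p₂ q₁ q₂ : Letter n) (Y : Word n), Y ≠ [] ∧
    P = p₁ :: Y ++ [p₂] ∧ Q = q₁ :: Word.bar Y ++ [q₂] ∧
    p₁ ≠ Letter.bar q₂ ∧ p₂ ≠ Letter.bar q₁ ∧
    ∀ x₁ x₂ : Letter n, Y.head? = some x₁ → Y.getLast? = some x₂ →
      o 𝒪 (cyc [q₂, Letter.bar p₁, x₁]) = o 𝒪 (cyc [Letter.bar q₁, p₂, Letter.bar x₂])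

/-- The ordered pair `(P,Q)` is `𝒪`-linked. -/
def IsLinked {n : ℕ} (𝒪 : CWord n) (P Q : Word n) : Prop :=
  FreelyReduced P ∧ FreelyReduced Q ∧ 2 ≤ P.length ∧ 2 ≤ Q.length ∧
    (LinkedType1 𝒪 P Q ∨ LinkedType2 𝒪 P Q ∨ LinkedType3 𝒪 P Q)

open Classical in
/-- The sign of a linked pair `(P,Q)`. -/
noncomputable def sign {n : ℕ} (𝒪 : CWord n) (P Q : Word n) : ℤ :=
  match P, Q with
  | p₁ :: ps, q₁ :: qs =>
    match ps.getLast?, qs.getLast?, ps.head? with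
    | some p₂, some q₂, some x₁ =>
      if LinkedType1 𝒪 (p₁ :: ps) (q₁ :: qs) then
        o 𝒪 (cyc [Letter.bar p₁, Letter.bar q₁, p₂, q₂])
      else if LinkedType2 𝒪 (p₁ :: ps) (q₁ :: qs) then
        o 𝒪 (cyc [Letter.bar p₁, Letter.bar q₁, x₁])
      else if LinkedType3 𝒪 (p₁ :: ps) (q₁ :: qs) then
        o 𝒪 (cyc [q₂, Letter.bar p₁, x₁])
      else 0
    | _, _, _ => 0
  | _, _ => 0

/-- `𝕃ℙ₁(𝒲)`: `(P,Q)` is an `𝒪`-linked pair of subwords of `𝒲`. -/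
def LP1 {n : ℕ} (𝒪 𝒲 : CWord n) (P Q : Word n) : Prop :=
  IsLinked 𝒪 P Q ∧ Subword P 𝒲 ∧ Subword Q 𝒲

/-- `𝕃ℙ₂(𝒱,𝒲)`: `(P,Q)` is an `𝒪`-linked pair with `P` a subword of `𝒱ʲ`,
`Q` a subword of `𝒲ᵏ` in the appropriate length windows. -/
def LP2 {n : ℕ} (𝒪 𝒱 𝒲 : CWord n) (P Q : Word n) : Prop :=
  IsLinked 𝒪 P Q ∧
    ∃ j k : ℕ, 0 < j ∧ 0 < k ∧ SubwordPow P 𝒱 j ∧ SubwordPow Q 𝒲 k ∧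
      (j - 1) * clen 𝒱 < P.length ∧ P.length ≤ j * clen 𝒱 ∧
      (k - 1) * clen 𝒲 < Q.length ∧ Q.length ≤ k * clen 𝒲

/-- The cut data for `δ` when `(P,Q)` has type (1) or (2): two cuts of `𝒲`
producing `W₁` (starting at the occurrence of `p₂`, the last letter of `P`) and
`W₂` (starting at the occurrence of `q₂`, the last letter of `Q`). -/
def DeltaPair12 {n : ℕ} (𝒪 𝒲 : CWord n) (P Q W₁ W₂ : Word n) : Prop :=
  (LinkedType1 𝒪 P Q ∨ LinkedType2 𝒪 P Q) ∧
  𝒲 = cyc (W₁ ++ W₂) ∧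
  (∃ (P' : Word n) (p₂ : Letter n), P = P' ++ [p₂] ∧ W₁.head? = some p₂ ∧
      P' <:+ W₁ ++ W₂) ∧
  (∃ (Q' : Word n) (q₂ : Letter n), Q = Q' ++ [q₂] ∧ W₂.head? = some q₂ ∧
      Q' <:+ W₂ ++ W₁)

/-- The cut data for `δ` when `(P,Q)` has type (3): `W₁` runs from `p₂` to
`q₁`, and `W₂` from `q₂` to `p₁`. -/
def DeltaPair3 {n : ℕ} (𝒪 𝒲 : CWord n) (P Q W₁ W₂ : Word n) : Prop :=
  LinkedType3 𝒪 P Q ∧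
  ∃ (p₁ p₂ q₁ q₂ : Letter n) (Y Y' : Word n), Y ≠ [] ∧ Y' ≠ [] ∧
    P = p₁ :: Y ++ [p₂] ∧ Q = q₁ :: Y' ++ [q₂] ∧
    W₁.head? = some p₂ ∧ W₁.getLast? = some q₁ ∧
    W₂.head? = some q₂ ∧ W₂.getLast? = some p₁ ∧
    𝒲 = cyc (W₁ ++ Y' ++ W₂ ++ Y)

/-- The words `W₁`, `W₂` obtained by cutting `𝒲` along the linked pair `(P,Q)`. -/
def DeltaPair {n : ℕ} (𝒪 𝒲 : CWord n) (P Q W₁ W₂ : Word n) : Prop :=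
  DeltaPair12 𝒪 𝒲 P Q W₁ W₂ ∨ DeltaPair3 𝒪 𝒲 P Q W₁ W₂

open Classical in
/-- A choice of the pair of linear words obtained by cutting `𝒲` along `(P,Q)`. -/
noncomputable def deltaW {n : ℕ} (𝒪 𝒲 : CWord n) (P Q : Word n) : Word n × Word n :=
  if h : ∃ W : Word n × Word n, DeltaPair 𝒪 𝒲 P Q W.1 W.2 then h.choose else ([], [])

/-- The cyclic word `δ₁(P,Q)`. -/
noncomputable def delta1 {n : ℕ} (𝒪 𝒲 : CWord n) (P Q : Word n) : CWord n :=
  cyc (deltaW 𝒪 𝒲 P Q).1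

/-- The cyclic word `δ₂(P,Q)`. -/
noncomputable def delta2 {n : ℕ} (𝒪 𝒲 : CWord n) (P Q : Word n) : CWord n :=
  cyc (deltaW 𝒪 𝒲 P Q).2

/-- `W₁` is the linear representative of `↑W₁` obtained by cutting immediately
before (the occurrence of) the last letter of `P`: `P` occurs (in a power)
ending exactly at the cut. -/
def CutEnds {n : ℕ} (W₁ P : Word n) : Prop :=
  ∃ (P' : Word n) (p₂ : Letter n) (j : ℕ),
    P = P' ++ [p₂] ∧ W₁.head? = some p₂ ∧ P' <:+ wpow W₁ j

/-- The data for `γ(P,Q)` when `(P,Q) ∈ 𝕃ℙ₂(𝒱,𝒲)` has type (1) or (2):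
`γ(P,Q) = c(V₁W₁)` where `V₁`, `W₁` are the representatives of `𝒱`, `𝒲` obtained
by cutting immediately before `p₂`, resp. `q₂`. -/
def GammaPair12 {n : ℕ} (𝒪 𝒱 𝒲 : CWord n) (P Q : Word n) (G : CWord n) : Prop :=
  (LinkedType1 𝒪 P Q ∨ LinkedType2 𝒪 P Q) ∧
  ∃ V₁ W₁ : Word n, cyc V₁ = 𝒱 ∧ cyc W₁ = 𝒲 ∧ CutEnds V₁ P ∧ CutEnds W₁ Q ∧
    G = cyc (V₁ ++ W₁)

/-- The data for `γ(P,Q)` when `(P,Q) ∈ 𝕃ℙ₂(𝒱,𝒲)` has type (3):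
`V₁` is the subword of `𝒱` starting right after the end of `Y` and ending right
before the first letter of `Y` (whose footprint in `𝒱` is the arc `U`), and
similarly `W₁` for `Ȳ` in `𝒲`; then `γ(P,Q) = c(V₁W₁)`. -/
def GammaPair3 {n : ℕ} (𝒪 𝒱 𝒲 : CWord n) (P Q : Word n) (G : CWord n) : Prop :=
  LinkedType3 𝒪 P Q ∧
  ∃ (p₁ p₂ q₁ q₂ : Letter n) (Y V₁ W₁ U U' : Word n) (j k : ℕ),
    P = p₁ :: Y ++ [p₂] ∧ Q = q₁ :: Word.bar Y ++ [q₂] ∧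
    V₁.head? = some p₂ ∧ V₁.getLast? = some p₁ ∧
    W₁.head? = some q₂ ∧ W₁.getLast? = some q₁ ∧
    𝒱 = cyc (U ++ V₁) ∧ Y <+: wpow (U ++ V₁) j ∧ Y.length % clen 𝒱 = U.length ∧
    𝒲 = cyc (U' ++ W₁) ∧ Word.bar Y <+: wpow (U' ++ W₁) k ∧
      (Word.bar Y).length % clen 𝒲 = U'.length ∧
    G = cyc (V₁ ++ W₁)

/-- `G` is the cyclic word `γ(P,Q)` associated to `(P,Q) ∈ 𝕃ℙ₂(𝒱,𝒲)`. -/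
def GammaPair {n : ℕ} (𝒪 𝒱 𝒲 : CWord n) (P Q : Word n) (G : CWord n) : Prop :=
  GammaPair12 𝒪 𝒱 𝒲 P Q G ∨ GammaPair3 𝒪 𝒱 𝒲 P Q G

open Classical in
/-- A choice of the cyclic word `γ(P,Q)` for `(P,Q) ∈ 𝕃ℙ₂(𝒱,𝒲)`. -/
noncomputable def gamma {n : ℕ} (𝒪 𝒱 𝒲 : CWord n) (P Q : Word n) : CWord n :=
  if h : ∃ G : CWord n, GammaPair 𝒪 𝒱 𝒲 P Q G then h.choose else Cycle.nil

/-- The set of non-empty reduced cyclic words, the basis of `𝕍`. -/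
def RedCyc (n : ℕ) := {𝒲 : CWord n // CReduced 𝒲}

instance {n : ℕ} [NeZero n] : Inhabited (RedCyc n) :=
  ⟨⟨cyc [default], by
    constructor
    · intro h
      have h' : ([(default : Letter n)] : Word n) = [] := (Cycle.coe_eq_nil _).mp h
      simp at h'
    · intro W hW
      have h1 : W ~r [(default : Letter n)] := Cycle.coe_eq_coe.mp hW
      have h2 : W = [(default : Letter n)] := List.perm_singleton.mp h1.perm
      rw [h2]
      exact List.isChain_singleton _⟩⟩

open Classical in
/-- View a cyclic word as a basis element of `𝕍` (junk value if not reduced). -/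
noncomputable def toRed {n : ℕ} [NeZero n] (c : CWord n) : RedCyc n :=
  if h : CReduced c then ⟨c, h⟩ else default


/-! ### Auxiliary list lemmas -/

section ListLemmas
variable {α : Type*}

lemma sublist_both_orders {b c : α} {T : List α} (hT : T.Nodup)
    (h1 : [b, c] <+ T) (h2 : [c, b] <+ T) : b = c := by
  induction T with
  | nil => simp at h1
  | cons x T ih =>
    have hx : x ∉ T := (List.nodup_cons.mp hT).1
    have hT' : T.Nodup := (List.nodup_cons.mp hT).2
    cases h1 with
    | cons _ h1' =>
      cases h2 with
      | cons _ h2' => exact ih hT' h1' h2'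
      | cons_cons h2' =>
        exact absurd (h1'.subset (by simp)) hx
    | cons_cons h1' =>
      cases h2 with
      | cons _ h2' =>
        exact absurd (h2'.subset (by simp)) hx
      | cons_cons h2' =>
        rfl

lemma rotation_head_unique {a : α} {X Y : List α} (hn : (a :: X).Nodup)
    (h : (a :: X) ~r (a :: Y)) : X = Y := by
  obtain ⟨k, hk⟩ := h
  have hlen : 0 < (a :: X).length := by simp
  rw [← List.rotate_mod] at hk
  have hlt : k % (a :: X).length < (a :: X).length := Nat.mod_lt _ hlen
  have h0 : ((a :: X).rotate (k % (a :: X).length)).head? = some a := by rw [hk]; rfl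
  rw [List.head?_rotate hlt] at h0
  have h1 : (a :: X)[0]? = some a := by simp
  have h2 := (List.getElem?_inj hlt hn).mp (h0.trans h1.symm)
  rw [h2, List.rotate_zero] at hk
  simpa using hk

/-- `[a,b,c]` occurs in cyclic order in the cyclic word represented by `L`. -/
def Cyc3 (a b c : α) (L : List α) : Prop := ∃ M, M ~r L ∧ [a, b, c] <+ M

lemma Cyc3.trans_rot {a b c : α} {L L' : List α} (h : Cyc3 a b c L) (hL : L ~r L') :
    Cyc3 a b c L' := by
  obtain ⟨M, hM, hs⟩ := h
  exact ⟨M, hM.trans hL, hs⟩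

lemma Cyc3.shift {a b c : α} {L : List α} (h : Cyc3 a b c L) : Cyc3 b c a L := by
  obtain ⟨M, hM, hsub⟩ := h
  rw [List.cons_sublist_iff] at hsub
  obtain ⟨r₁, r₂, rfl, ha, h2⟩ := hsub
  obtain ⟨A, B, rfl⟩ := List.append_of_mem ha
  refine ⟨r₂ ++ (A ++ a :: B), ?_, ?_⟩
  · exact (List.isRotated_append (l := A ++ a :: B) (l' := r₂)).symm.trans hM
  · have hbc : [b, c] <+ r₂ := h2
    have hax : [a] <+ A ++ a :: B := by
      apply List.singleton_sublist.mpr; simp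
    simpa using hbc.append hax

lemma exists_rotation_cons {a : α} {L : List α} (ha : a ∈ L) : ∃ T, (a :: T) ~r L := by
  obtain ⟨A, B, rfl⟩ := List.append_of_mem ha
  refine ⟨B ++ A, ?_⟩
  have : (a :: B) ++ A ~r A ++ (a :: B) := List.isRotated_append
  simpa using this

lemma cyc3_tail {a b c : α} {L T : List α} (hL : L.Nodup) (h : Cyc3 a b c L)
    (hT : (a :: T) ~r L) : [b, c] <+ T := by
  obtain ⟨M, hM, hsub⟩ := h
  rw [List.cons_sublist_iff] at hsub
  obtain ⟨r₁, r₂, rfl, ha, h2⟩ := hsub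
  obtain ⟨A, B, rfl⟩ := List.append_of_mem ha
  have hrot : (a :: (B ++ r₂ ++ A)) ~r L := by
    have h1 : (a :: (B ++ r₂)) ++ A ~r A ++ (a :: (B ++ r₂)) := List.isRotated_append
    have h3 : A ++ (a :: (B ++ r₂)) = (A ++ a :: B) ++ r₂ := by simp
    rw [h3] at h1
    have h4 : a :: (B ++ r₂ ++ A) = (a :: (B ++ r₂)) ++ A := by simp
    rw [h4]
    exact h1.trans hM
  have hnd : (a :: (B ++ r₂ ++ A)).Nodup := hrot.perm.nodup_iff.mpr hL
  have heq : B ++ r₂ ++ A = T := rotation_head_unique hnd (hrot.trans hT.symm)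
  have h5 : [b, c] <+ B ++ r₂ ++ A :=
    h2.trans ((List.sublist_append_right B r₂).trans (List.sublist_append_left _ A))
  rwa [heq] at h5

lemma cyc3_not_both {a b c : α} {L : List α} (hL : L.Nodup) (ha : a ∈ L) (hbc : b ≠ c)
    (h1 : Cyc3 a b c L) (h2 : Cyc3 a b c L.reverse) : False := by
  obtain ⟨T, hT⟩ := exists_rotation_cons ha
  have hs1 : [b, c] <+ T := cyc3_tail hL h1 hT
  have hT' : (a :: T.reverse) ~r L.reverse := by
    have h3 : (a :: T).reverse ~r L.reverse := hT.reverse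
    have h4 : (a :: T).reverse = T.reverse ++ [a] := by simp
    have h5 : ([a] ++ T.reverse) ~r (T.reverse ++ [a]) := List.isRotated_append
    rw [h4] at h3
    exact (by simpa using h5 : (a :: T.reverse) ~r (T.reverse ++ [a])).trans h3
  have hs2 : [b, c] <+ T.reverse := cyc3_tail (by simpa using hL) h2 hT'
  have hs2' : [c, b] <+ T := by simpa using hs2.reverse
  have hTnd : T.Nodup := by
    have h6 : (a :: T).Nodup := hT.perm.nodup_iff.mpr hL
    exact (List.nodup_cons.mp h6).2
  exact hbc (sublist_both_orders hTnd hs1 hs2')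

end ListLemmas

/-! ### Auxiliary lemmas on words and orientations -/

variable {n : ℕ} {𝒪 : CWord n}

@[simp] lemma bar_bar (x : Letter n) : x.bar.bar = x := by
  cases x; simp [Letter.bar]

@[simp] lemma wbar_wbar (W : Word n) : Word.bar (Word.bar W) = W := by
  simp [Word.bar, List.map_reverse, List.map_map, Function.comp_def]

lemma wbar_eq_nil {W : Word n} : Word.bar W = [] ↔ W = [] := by
  simp [Word.bar]

lemma head?_wbar (W : Word n) : (Word.bar W).head? = W.getLast?.map Letter.bar := by
  simp [Word.bar, List.head?_reverse, List.getLast?_map]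

lemma getLast?_wbar (W : Word n) : (Word.bar W).getLast? = W.head?.map Letter.bar := by
  simp [Word.bar, List.getLast?_reverse, List.head?_map]

lemma fr_reverse {W : Word n} : FreelyReduced W.reverse ↔ FreelyReduced W := by
  unfold FreelyReduced List.Chain'
  rw [List.isChain_reverse]
  constructor <;> intro h <;> refine h.imp ?_ <;> intro a b hab <;>
    intro e <;> apply hab <;> rw [e] <;> simp [Function.flip_def] at *

lemma creduced_reverse {W : Word n} (h : CReduced (cyc W)) : CReduced (cyc W.reverse) := by
  obtain ⟨h1, h2⟩ := h
  constructor
  · intro hn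
    apply h1
    rw [cyc, Cycle.coe_eq_nil] at hn ⊢
    simpa using hn
  · intro V hV
    have hr : V.reverse ~r W := by
      have := Cycle.coe_eq_coe.mp hV
      simpa using this.reverse
    have := h2 V.reverse (Cycle.coe_eq_coe.mpr hr)
    exact fr_reverse.mp this

lemma creduced_reverse_iff {W : Word n} : CReduced (cyc W.reverse) ↔ CReduced (cyc W) := by
  constructor
  · intro h; have := creduced_reverse h; simpa using this
  · exact creduced_reverse

lemma orientPos_rev_iff {W : Word n} :
    OrientPos 𝒪 (cyc W.reverse) ↔ OrientNeg 𝒪 (cyc W) := by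
  constructor
  · rintro ⟨hred, W', O, hW', hO, hsub⟩
    refine ⟨creduced_reverse_iff.mp hred, W'.reverse, O, ?_, hO, by simpa using hsub.reverse⟩
    have hr : W'.reverse ~r W := by
      have := Cycle.coe_eq_coe.mp hW'
      simpa using this.reverse
    exact Cycle.coe_eq_coe.mpr hr
  · rintro ⟨hred, W', O, hW', hO, hsub⟩
    refine ⟨creduced_reverse_iff.mpr hred, W'.reverse, O, ?_, hO, by simpa using hsub.reverse⟩
    exact Cycle.coe_eq_coe.mpr ((Cycle.coe_eq_coe.mp hW').reverse)

lemma orientNeg_rev_iff {W : Word n} :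
    OrientNeg 𝒪 (cyc W.reverse) ↔ OrientPos 𝒪 (cyc W) := by
  constructor
  · rintro ⟨hred, W', O, hW', hO, hsub⟩
    refine ⟨creduced_reverse_iff.mp hred, W'.reverse, O, ?_, hO, by simpa using hsub.reverse⟩
    have hr : W'.reverse ~r W := by
      have := Cycle.coe_eq_coe.mp hW'
      simpa using this.reverse
    exact Cycle.coe_eq_coe.mpr hr
  · rintro ⟨hred, W', O, hW', hO, hsub⟩
    refine ⟨creduced_reverse_iff.mpr hred, W'.reverse, O, ?_, hO, by simpa using hsub.reverse⟩
    exact Cycle.coe_eq_coe.mpr ((Cycle.coe_eq_coe.mp hW').reverse)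

lemma o_rev_ne_zero {A : Word n} : o 𝒪 (cyc A.reverse) ≠ 0 ↔ o 𝒪 (cyc A) ≠ 0 := by
  by_cases hp : OrientPos 𝒪 (cyc A) <;> by_cases hn : OrientNeg 𝒪 (cyc A) <;>
    simp [o, orientPos_rev_iff, orientNeg_rev_iff, hp, hn]

lemma not_pos_and_neg (h𝒪 : SurfaceSymbol 𝒪) {A : Word n} (hA : A.length = 3) :
    ¬(OrientPos 𝒪 (cyc A) ∧ OrientNeg 𝒪 (cyc A)) := by
  rintro ⟨⟨_, W, O, hWc, hOc, hsub⟩, ⟨_, W', O', hWc', hOc', hsub'⟩⟩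
  obtain ⟨_, O₀, hO₀, hnd, -⟩ := h𝒪
  have hO : O ~r O₀ := Cycle.coe_eq_coe.mp (hOc.trans hO₀.symm)
  have hOnd : O.Nodup := hO.perm.nodup_iff.mpr hnd
  have hO' : O' ~r O₀ := Cycle.coe_eq_coe.mp (hOc'.trans hO₀.symm)
  have hWr : W ~r A := Cycle.coe_eq_coe.mp hWc
  have hWlen : W.length = 3 := by rw [hWr.perm.length_eq, hA]
  obtain ⟨a, b, c, rfl⟩ := List.length_eq_three.mp hWlen
  have hWnd : ([a, b, c] : Word n).Nodup := hOnd.sublist hsub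
  have hrot : ([a, b, c] : Word n) ~r W' := hWr.trans (Cycle.coe_eq_coe.mp hWc').symm
  have hc1 : Cyc3 a b c O := ⟨O, List.IsRotated.refl O, hsub⟩
  have hRR : O'.reverse ~r O.reverse := ((hO'.trans hO.symm)).reverse
  have hc2 : Cyc3 a b c O.reverse := by
    obtain ⟨k, hk⟩ := hrot
    rw [← List.rotate_mod] at hk
    have hklt : k % ([a, b, c] : Word n).length = 0 ∨ k % ([a, b, c] : Word n).length = 1 ∨
        k % ([a, b, c] : Word n).length = 2 := by
      have : k % ([a, b, c] : Word n).length < 3 := Nat.mod_lt _ (by simp)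
      omega
    have hd : Cyc3 a b c O'.reverse := by
      rcases hklt with hm | hm | hm
      · rw [hm, List.rotate_zero] at hk
        exact ⟨O'.reverse, List.IsRotated.refl _, hk ▸ hsub'⟩
      · rw [hm, List.rotate_eq_drop_append_take (by simp)] at hk
        have hk' : W' = [b, c, a] := by simpa using hk.symm
        rw [hk'] at hsub'
        exact Cyc3.shift (Cyc3.shift (⟨O'.reverse, List.IsRotated.refl _, hsub'⟩ : Cyc3 b c a O'.reverse))
      · rw [hm, List.rotate_eq_drop_append_take (by simp)] at hk
        have hk' : W' = [c, a, b] := by simpa using hk.symm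
        rw [hk'] at hsub'
        exact Cyc3.shift (⟨O'.reverse, List.IsRotated.refl _, hsub'⟩ : Cyc3 c a b O'.reverse)
    exact hd.trans_rot hRR
  have ha : a ∈ O := hsub.subset (by simp)
  have hbc : b ≠ c := by
    simp only [List.nodup_cons, List.mem_cons] at hWnd
    tauto
  exact cyc3_not_both hOnd ha hbc hc1 hc2

lemma o_rev_three (h𝒪 : SurfaceSymbol 𝒪) {A : Word n} (hA : A.length = 3) :
    o 𝒪 (cyc A.reverse) = - o 𝒪 (cyc A) := by
  have hex := not_pos_and_neg h𝒪 hA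
  by_cases hp : OrientPos 𝒪 (cyc A) <;> by_cases hn : OrientNeg 𝒪 (cyc A)
  · exact absurd ⟨hp, hn⟩ hex
  all_goals simp [o, orientPos_rev_iff, orientNeg_rev_iff, hp, hn]

lemma cyc_rot3 (x y z : Letter n) : cyc [x, y, z] = cyc [y, z, x] :=
  Cycle.coe_eq_coe.mpr (List.isRotated_append (l := [x]) (l' := [y, z]))

lemma cyc_rot2 (x y z w : Letter n) : cyc [x, y, z, w] = cyc [z, w, x, y] :=
  Cycle.coe_eq_coe.mpr (List.isRotated_append (l := [x, y]) (l' := [z, w]))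

/-! ### Symmetry of the linking conditions -/

lemma lt1_symm {P Q : Word n} (h : LinkedType1 𝒪 P Q) : LinkedType1 𝒪 Q P := by
  obtain ⟨p₁, p₂, q₁, q₂, rfl, rfl, ho⟩ := h
  refine ⟨q₁, q₂, p₁, p₂, rfl, rfl, ?_⟩
  have e : cyc [Letter.bar q₁, Letter.bar p₁, q₂, p₂]
      = cyc (([Letter.bar p₁, Letter.bar q₁, p₂, q₂] : Word n).reverse) := by
    have h4 : (([Letter.bar p₁, Letter.bar q₁, p₂, q₂] : Word n).reverse)
        = [q₂, p₂, Letter.bar q₁, Letter.bar p₁] := by simp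
    rw [h4]
    exact cyc_rot2 (Letter.bar q₁) (Letter.bar p₁) q₂ p₂
  rw [e]
  exact o_rev_ne_zero.mpr ho

lemma lt2_symm (h𝒪 : SurfaceSymbol 𝒪) {P Q : Word n} (h : LinkedType2 𝒪 P Q) :
    LinkedType2 𝒪 Q P := by
  obtain ⟨p₁, p₂, q₁, q₂, Y, hY, rfl, rfl, h1, h2, ho⟩ := h
  refine ⟨q₁, q₂, p₁, p₂, Y, hY, rfl, rfl, Ne.symm h1, Ne.symm h2, ?_⟩
  intro x₁ x₂ hx₁ hx₂
  have hlhs : cyc [Letter.bar q₁, Letter.bar p₁, x₁]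
      = cyc (([Letter.bar p₁, Letter.bar q₁, x₁] : Word n).reverse) := by
    have h4 : (([Letter.bar p₁, Letter.bar q₁, x₁] : Word n).reverse)
        = [x₁, Letter.bar q₁, Letter.bar p₁] := by simp
    rw [h4]
    exact (cyc_rot3 x₁ (Letter.bar q₁) (Letter.bar p₁)).symm
  have hrhs : cyc [q₂, p₂, Letter.bar x₂]
      = cyc (([p₂, q₂, Letter.bar x₂] : Word n).reverse) := by
    have h4 : (([p₂, q₂, Letter.bar x₂] : Word n).reverse)
        = [Letter.bar x₂, q₂, p₂] := by simp
    rw [h4]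
    exact (cyc_rot3 (Letter.bar x₂) q₂ p₂).symm
  rw [hlhs, hrhs, o_rev_three h𝒪 (by simp), o_rev_three h𝒪 (by simp), ho x₁ x₂ hx₁ hx₂]

lemma lt3_symm (h𝒪 : SurfaceSymbol 𝒪) {P Q : Word n} (h : LinkedType3 𝒪 P Q) :
    LinkedType3 𝒪 Q P := by
  obtain ⟨p₁, p₂, q₁, q₂, Y, hY, hP, hQ, h1, h2, ho⟩ := h
  refine ⟨q₁, q₂, p₁, p₂, Word.bar Y, by simpa [wbar_eq_nil] using hY, hQ,
    by rw [wbar_wbar]; exact hP,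
    fun e => h2 (by rw [e, bar_bar]), fun e => h1 (by rw [e, bar_bar]), ?_⟩
  intro x₁ x₂ hx₁ hx₂
  rw [head?_wbar] at hx₁
  rw [getLast?_wbar] at hx₂
  obtain ⟨y₂, hy₂, hxy₁⟩ := Option.map_eq_some_iff.mp hx₁
  obtain ⟨y₁, hy₁, hxy₂⟩ := Option.map_eq_some_iff.mp hx₂
  subst hxy₁
  subst hxy₂
  rw [bar_bar]
  have hkey := ho y₁ y₂ hy₁ hy₂
  have hlhs : cyc [p₂, Letter.bar q₁, Letter.bar y₂]
      = cyc (([Letter.bar q₁, p₂, Letter.bar y₂] : Word n).reverse) := by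
    have h4 : (([Letter.bar q₁, p₂, Letter.bar y₂] : Word n).reverse)
        = [Letter.bar y₂, p₂, Letter.bar q₁] := by simp
    rw [h4]
    exact (cyc_rot3 (Letter.bar y₂) p₂ (Letter.bar q₁)).symm
  have hrhs : cyc [Letter.bar p₁, q₂, y₁]
      = cyc (([q₂, Letter.bar p₁, y₁] : Word n).reverse) := by
    have h4 : (([q₂, Letter.bar p₁, y₁] : Word n).reverse)
        = [y₁, Letter.bar p₁, q₂] := by simp
    rw [h4]
    exact (cyc_rot3 y₁ (Letter.bar p₁) q₂).symm
  rw [hlhs, hrhs, o_rev_three h𝒪 (by simp), o_rev_three h𝒪 (by simp), hkey]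

lemma islinked_symm (h𝒪 : SurfaceSymbol 𝒪) {P Q : Word n} (h : IsLinked 𝒪 P Q) :
    IsLinked 𝒪 Q P :=
  ⟨h.2.1, h.1, h.2.2.2.1, h.2.2.1,
    h.2.2.2.2.elim (fun t => Or.inl (lt1_symm t))
      (fun t => t.elim (fun t => Or.inr (Or.inl (lt2_symm h𝒪 t)))
        (fun t => Or.inr (Or.inr (lt3_symm h𝒪 t))))⟩


/-- If `(P,Q) ∈ 𝕃ℙ₂(𝒱,𝒲)`, then `(Q,P) ∈ 𝕃ℙ₂(𝒲,𝒱)` and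
`γ(P,Q) = γ(Q,P)`. -/
theorem gamma_symm (n : ℕ) (𝒪 𝒱 𝒲 : CWord n) (h𝒪 : SurfaceSymbol 𝒪)
    (hV : CReduced 𝒱) (hW : CReduced 𝒲) (P Q : Word n) (h : LP2 𝒪 𝒱 𝒲 P Q) :
    LP2 𝒪 𝒲 𝒱 Q P ∧
      ∀ G : CWord n, GammaPair 𝒪 𝒱 𝒲 P Q G → GammaPair 𝒪 𝒲 𝒱 Q P G := by
  obtain ⟨hL, j, k, hj, hk, hSP, hSQ, i1, i2, i3, i4⟩ := h
  constructor
  · exact ⟨islinked_symm h𝒪 hL, k, j, hk, hj, hSQ, hSP, i3, i4, i1, i2⟩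
  · intro G hG
    cases hG with
    | inl h12 =>
      obtain ⟨ht, V₁, W₁, hV₁, hW₁, hCP, hCQ, hGe⟩ := h12
      left
      refine ⟨Or.imp lt1_symm (lt2_symm h𝒪) ht, W₁, V₁, hW₁, hV₁, hCQ, hCP, ?_⟩
      rw [hGe]
      exact Cycle.coe_eq_coe.mpr List.isRotated_append
    | inr h3 =>
      obtain ⟨ht, p₁, p₂, q₁, q₂, Y, V₁, W₁, U, U', j', k', hP, hQ, v1, v2, w1, w2,
        hV, hYp, hYl, hW, hBp, hBl, hGe⟩ := h3
      right
      refine ⟨lt3_symm h𝒪 ht, q₁, q₂, p₁, p₂, Word.bar Y, W₁, V₁, U', U, k', j',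
        hQ, by rw [wbar_wbar]; exact hP, w1, w2, v1, v2, hW, hBp, hBl, hV,
        by rw [wbar_wbar]; exact hYp, by rw [wbar_wbar]; exact hYl, ?_⟩
      rw [hGe]
      exact Cycle.coe_eq_coe.mpr List.isRotated_append

end CyclicWords
end

section
/- Let 𝒱 and 𝒲 be reduced cyclic words and let (P,Q) ∈ 𝕃ℙ₂(𝒱,𝒲) be a linked pair of type (2) with P = p₁Xp₂ and Q = q₁Xq₂, and let V₁ and W₁ be the linear representatives of 𝒱 and 𝒲 obtained by cutting immediately before p₂ and immediately before q₂ respectively. Then there exist linked pairs (P₁,Q₁) ∈ 𝕃ℙ₂(γ(P,Q),𝒲) and (P₂,Q₂) ∈ 𝕃ℙ₂(𝒱,γ(P,Q)) with P₁ = p₁XW₁p₂, Q₁ = q₁XW₁q₂, P₂ = p₁XV₁p₂ and Q₂ = q₁XV₁q₂. -/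
open List

namespace CyclicWords

section Helpers

variable {n : ℕ}

lemma wpow_zero (V : Word n) : wpow V 0 = [] := rfl

lemma wpow_succ (V : Word n) (a : ℕ) : wpow V (a+1) = V ++ wpow V a := by
  simp [wpow, List.replicate_succ]

lemma wpow_add (V : Word n) (a b : ℕ) : wpow V (a+b) = wpow V a ++ wpow V b := by
  unfold wpow; rw [List.replicate_add, List.flatten_append]

lemma wpow_succ' (V : Word n) (a : ℕ) : wpow V (a+1) = wpow V a ++ V := by
  rw [wpow_add]; simp [wpow]

lemma wpow_length (V : Word n) (a : ℕ) : (wpow V a).length = a * V.length := by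
  induction a with
  | zero => simp [wpow]
  | succ a ih => rw [wpow_succ, List.length_append, ih, Nat.succ_mul]; omega

lemma suffix_of_suffix_length_le {l₁ l₂ l₃ : Word n} (h₁ : l₁ <:+ l₃) (h₂ : l₂ <:+ l₃)
    (h : l₁.length ≤ l₂.length) : l₁ <:+ l₂ := by
  rw [← List.reverse_prefix] at h₁ h₂ ⊢
  exact List.prefix_of_prefix_length_le h₁ h₂ (by simpa using h)

lemma suffix_eq_of_length {l₁ l₂ l₃ : Word n} (h₁ : l₁ <:+ l₃) (h₂ : l₂ <:+ l₃)
    (h : l₁.length = l₂.length) : l₁ = l₂ :=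
  (suffix_of_suffix_length_le h₁ h₂ h.le).eq_of_length h

lemma suffix_of_small {V X : Word n} {a : ℕ} (hX : X <:+ wpow V a)
    (hlen : X.length ≤ V.length) : X <:+ V := by
  cases a with
  | zero =>
    have : X = [] := List.eq_nil_of_suffix_nil hX
    simp [this]
  | succ a =>
    exact suffix_of_suffix_length_le hX ⟨wpow V a, (wpow_succ' V a).symm⟩ hlen

lemma peel {V X : Word n} {a : ℕ} (hV : V ≠ []) (hX : X <:+ wpow V a)
    (hlen : V.length ≤ X.length) :
    X.drop V.length ++ V = X ∧ X.drop V.length <:+ wpow V a := by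
  have hVpos : 0 < V.length := List.length_pos_iff.mpr hV
  have ha : a ≠ 0 := by
    rintro rfl
    rw [wpow_zero] at hX
    have hXnil := List.eq_nil_of_suffix_nil hX
    subst hXnil
    simp at hlen
    exact hV hlen
  obtain ⟨a', rfl⟩ := Nat.exists_eq_succ_of_ne_zero ha
  have hVsuf : V <:+ wpow V (a'+1) := ⟨wpow V a', (wpow_succ' V a').symm⟩
  have hVX : V <:+ X := suffix_of_suffix_length_le hVsuf hX hlen
  obtain ⟨T, hT⟩ := hVX
  obtain ⟨C, hC⟩ := id hX
  have hCT : C ++ T = wpow V a' := by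
    have : (C ++ T) ++ V = wpow V a' ++ V := by
      rw [← wpow_succ', ← hC, ← hT, List.append_assoc]
    exact (List.append_inj' this rfl).1
  have hTsuf : T <:+ wpow V (a'+1) := ⟨V ++ C, by rw [wpow_succ, ← hCT]; simp⟩
  have hD : X.drop V.length <:+ wpow V (a'+1) := (List.drop_suffix _ _).trans ⟨C, hC⟩
  have hTD : T = X.drop V.length := by
    apply suffix_eq_of_length hTsuf hD
    have h1 : T.length + V.length = X.length := by
      rw [← hT]; simp
    simp
    omega
  rw [← hTD]
  exact ⟨hT, hTsuf⟩

lemma key {V W : Word n} (hV : V ≠ []) (hW : W ≠ []) {a b : ℕ} :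
    ∀ N (X : Word n), X.length ≤ N → X <:+ wpow V a → X <:+ wpow W b →
      (∃ t, X <:+ wpow (V++W) t ++ V) ∧ (∃ t, X <:+ wpow (V++W) t) := by
  have hVpos : 0 < V.length := List.length_pos_iff.mpr hV
  have hWpos : 0 < W.length := List.length_pos_iff.mpr hW
  intro N
  induction N with
  | zero =>
    intro X hN hXV hXW
    have hXnil : X = [] := List.length_eq_zero_iff.mp (Nat.le_antisymm hN (Nat.zero_le _))
    subst hXnil
    exact ⟨⟨0, List.nil_suffix⟩, ⟨0, List.nil_suffix⟩⟩
  | succ N ih =>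
    intro X hN hXV hXW
    have part2 : ∃ t, X <:+ wpow (V++W) t := by
      by_cases h : X.length ≤ W.length
      · exact ⟨1, (suffix_of_small hXW h).trans ⟨V, by simp [wpow]⟩⟩
      · push_neg at h
        obtain ⟨heq, hdropW⟩ := peel hW hXW h.le
        set T := X.drop W.length with hTdef
        have hTV : T <:+ wpow V a := (List.drop_suffix _ _).trans hXV
        have hTlen : T.length ≤ N := by
          rw [hTdef, List.length_drop]
          omega
        obtain ⟨⟨t, ht⟩, -⟩ := ih T hTlen hTV hdropW
        refine ⟨t+1, ?_⟩
        rw [← heq, wpow_succ']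
        obtain ⟨C, hC⟩ := ht
        exact ⟨C, by rw [← List.append_assoc, hC, List.append_assoc]⟩
    refine ⟨?_, part2⟩
    by_cases h : X.length ≤ V.length
    · exact ⟨0, by simpa [wpow] using suffix_of_small hXV h⟩
    · push_neg at h
      obtain ⟨heq, hdropV⟩ := peel hV hXV h.le
      set T := X.drop V.length with hTdef
      have hTW : T <:+ wpow W b := (List.drop_suffix _ _).trans hXW
      have hTlen : T.length ≤ N := by
        rw [hTdef, List.length_drop]
        omega
      obtain ⟨-, ⟨t, ht⟩⟩ := ih T hTlen hdropV hTW
      refine ⟨t, ?_⟩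
      rw [← heq]
      obtain ⟨C, hC⟩ := ht
      exact ⟨C, by rw [← List.append_assoc, hC]⟩

lemma wpow_prefix_mono (V : Word n) {a b : ℕ} (h : a ≤ b) : wpow V a <+: wpow V b := by
  obtain ⟨c, rfl⟩ := Nat.exists_eq_add_of_le h
  exact ⟨wpow V c, (wpow_add V a c).symm⟩

lemma prefix_window {R Z : Word n} {t k : ℕ} (h : Z <+: wpow R t)
    (hlen : Z.length ≤ k * R.length) : Z <+: wpow R k := by
  rcases le_total t k with hc | hc
  · exact h.trans (wpow_prefix_mono R hc)
  · exact List.prefix_of_prefix_length_le h (wpow_prefix_mono R hc)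
      (by rw [wpow_length]; exact hlen)

lemma wpow_rot (W : Word n) (r : ℕ) (hr : r ≤ W.length) (t : ℕ) :
    wpow (W.drop r ++ W.take r) (t+1) = W.drop r ++ wpow W t ++ W.take r := by
  obtain ⟨T, D, hW, hT, hD⟩ : ∃ T D, T ++ D = W ∧ W.take r = T ∧ W.drop r = D :=
    ⟨_, _, List.take_append_drop r W, rfl, rfl⟩
  rw [hT, hD]
  induction t with
  | zero => simp [wpow]
  | succ t ih =>
    rw [wpow_succ (D++T), ih, wpow_succ, ← hW]
    simp [List.append_assoc]

lemma subword_pow_window {R Z : Word n} {m : ℕ} (hR : R ≠ []) (hZ : Z ≠ [])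
    (h : Z <:+: wpow R m) :
    ∃ k, 0 < k ∧ SubwordPow Z (cyc R) k ∧
      (k-1) * R.length < Z.length ∧ Z.length ≤ k * R.length := by
  have hRpos : 0 < R.length := List.length_pos_iff.mpr hR
  have hZpos : 0 < Z.length := List.length_pos_iff.mpr hZ
  set k := (Z.length - 1) / R.length + 1 with hk
  have hq1 := Nat.div_add_mod (Z.length - 1) R.length
  have hq2 := Nat.mod_lt (Z.length - 1) hRpos
  have hw1 : (k-1) * R.length < Z.length := by
    rw [hk, Nat.add_sub_cancel, Nat.mul_comm]
    omega
  have hw2 : Z.length ≤ k * R.length := by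
    rw [hk, Nat.add_mul, one_mul, Nat.mul_comm]
    omega
  refine ⟨k, Nat.succ_pos _, ?_, hw1, hw2⟩
  obtain ⟨A, B, hAB⟩ := h
  obtain ⟨q, r, hqr, hrlt⟩ : ∃ q r, A.length = q * R.length + r ∧ r < R.length := by
    refine ⟨A.length / R.length, A.length % R.length, ?_, Nat.mod_lt _ hRpos⟩
    have := Nat.div_add_mod A.length R.length
    rw [Nat.mul_comm]
    omega
  have hALen : A.length + Z.length + B.length = m * R.length := by
    have h1 := congrArg List.length hAB
    simp [wpow_length] at h1
    omega
  have hqm : q < m := by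
    by_contra hcon
    push_neg at hcon
    have h2 : m * R.length ≤ q * R.length := Nat.mul_le_mul_right _ hcon
    omega
  have hApre : A <+: wpow R m := ⟨Z ++ B, by rw [← hAB]; simp⟩
  have hApre2 : wpow R q ++ R.take r <+: wpow R m := by
    have h1 : wpow R q ++ R.take r <+: wpow R q ++ R :=
      ⟨R.drop r, by rw [List.append_assoc, List.take_append_drop]⟩
    have h2 : wpow R q ++ R <+: wpow R m := by
      rw [← wpow_succ']
      exact wpow_prefix_mono R hqm
    exact h1.trans h2
  have hlenA : A.length = (wpow R q ++ R.take r).length := by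
    simp [wpow_length, List.length_take]
    omega
  have hAeq : A = wpow R q ++ R.take r :=
    (List.prefix_of_prefix_length_le hApre hApre2 hlenA.le).eq_of_length hlenA
  have hsplit : wpow R q ++ (R.take r ++ (Z ++ B)) = wpow R q ++ wpow R (m-q) := by
    rw [← wpow_add, Nat.add_sub_cancel' hqm.le, ← hAB, hAeq]
    simp [List.append_assoc]
  have hZB : R.take r ++ (Z ++ B) = wpow R (m - q) := List.append_cancel_left hsplit
  obtain ⟨m', hm'⟩ : ∃ m', m - q = m' + 1 := ⟨m - q - 1, by omega⟩
  have hZB2 : Z ++ B = R.drop r ++ wpow R m' := by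
    have h3 : R.take r ++ (Z ++ B) = R.take r ++ (R.drop r ++ wpow R m') := by
      rw [hZB, hm', wpow_succ, ← List.append_assoc, List.take_append_drop]
    exact List.append_cancel_left h3
  have hZpre : Z <+: wpow (R.drop r ++ R.take r) (m'+1) := by
    rw [wpow_rot R r hrlt.le m']
    exact ((hZB2 ▸ (List.prefix_append Z B)).trans ⟨R.take r, rfl⟩)
  have hZk : Z <+: wpow (R.drop r ++ R.take r) k := by
    apply prefix_window hZpre
    have hlen' : (R.drop r ++ R.take r).length = R.length := by
      simp [Nat.min_eq_left hrlt.le]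
      omega
    rw [hlen']
    exact hw2
  refine ⟨R.drop r ++ R.take r, ?_, hZk.isInfix⟩
  have hrot : R ~r (R.drop r ++ R.take r) := ⟨r, List.rotate_eq_drop_append_take hrlt.le⟩
  exact Cycle.coe_eq_coe.mpr hrot.symm

lemma fr_build {pa c mh x₂ : Letter n} {X M : Word n} (hX : X ≠ []) (hM : M ≠ [])
    (h1 : List.Chain' (fun a b => b ≠ Letter.bar a) (pa :: X))
    (h2 : FreelyReduced M)
    (hXlast : X.getLast? = some x₂) (hMlast : M.getLast? = some x₂)
    (hMhead : M.head? = some mh) (hmh : mh ≠ Letter.bar x₂)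
    (hc : c ≠ Letter.bar x₂) :
    FreelyReduced (pa :: (X ++ M) ++ [c]) := by
  have e : pa :: (X ++ M) ++ [c] = (pa :: X) ++ (M ++ [c]) := by simp
  rw [FreelyReduced, e, List.Chain', List.isChain_append]
  refine ⟨h1, ?_, ?_⟩
  · rw [List.isChain_append]
    refine ⟨h2, List.isChain_singleton _, ?_⟩
    intro x hx y hy
    simp [hMlast] at hx
    simp at hy
    subst hx
    subst hy
    exact hc
  · intro x hx y hy
    have hgl : (pa :: X).getLast? = some x₂ := by
      rw [show pa :: X = [pa] ++ X from rfl, List.getLast?_append_of_ne_nil _ hX, hXlast]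
    simp [hgl] at hx
    simp [List.head?_append, hMhead] at hy
    subst hx
    subst hy
    exact hmh

end Helpers


/-- For a type-(2) pair `(P,Q) ∈ 𝕃ℙ₂(𝒱,𝒲)` with `P = p₁Xp₂`,
`Q = q₁Xq₂` and representatives `V₁`, `W₁` cut before `p₂`, `q₂` (so that
`γ(P,Q) = c(V₁W₁)`), the pairs `(P₁,Q₁) = (p₁XW₁p₂, q₁XW₁q₂)` and
`(P₂,Q₂) = (p₁XV₁p₂, q₁XV₁q₂)` satisfy `(P₁,Q₁) ∈ 𝕃ℙ₂(γ(P,Q),𝒲)` and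
`(P₂,Q₂) ∈ 𝕃ℙ₂(𝒱,γ(P,Q))`. -/
theorem lp2_gamma_pairs (n : ℕ) (𝒪 𝒱 𝒲 : CWord n) (h𝒪 : SurfaceSymbol 𝒪)
    (hV : CReduced 𝒱) (hW : CReduced 𝒲) (P Q : Word n) (h : LP2 𝒪 𝒱 𝒲 P Q)
    (ht2 : LinkedType2 𝒪 P Q) (p₁ p₂ q₁ q₂ : Letter n) (X V₁ W₁ : Word n)
    (hP : P = p₁ :: X ++ [p₂]) (hQ : Q = q₁ :: X ++ [q₂])
    (hV₁ : cyc V₁ = 𝒱) (hcutP : CutEnds V₁ P)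
    (hW₁ : cyc W₁ = 𝒲) (hcutQ : CutEnds W₁ Q) :
    LP2 𝒪 (cyc (V₁ ++ W₁)) 𝒲
        (p₁ :: (X ++ W₁) ++ [p₂]) (q₁ :: (X ++ W₁) ++ [q₂]) ∧
    LP2 𝒪 𝒱 (cyc (V₁ ++ W₁))
        (p₁ :: (X ++ V₁) ++ [p₂]) (q₁ :: (X ++ V₁) ++ [q₂]) := by
  classical
  obtain ⟨hlinked, -⟩ := h
  obtain ⟨hfrP, hfrQ, -, -, -⟩ := hlinked
  rw [hP] at hfrP
  rw [hQ] at hfrQ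
  -- identify the type-2 witnesses with the given decomposition
  obtain ⟨a1, a2, b1, b2, Y, hYne, hPY, hQY, hne1, hne2, ho⟩ := ht2
  rw [hP] at hPY
  rw [hQ] at hQY
  injection hPY with e1 e2
  obtain ⟨e3, e4⟩ := List.append_inj' e2 rfl
  injection e4 with e5
  subst e1
  subst e3
  subst e5
  injection hQY with f1 f2
  have f3 := List.append_cancel_left f2
  injection f3 with f4
  subst f1
  subst f4
  have hX : X ≠ [] := hYne
  -- identify cut data
  obtain ⟨P', pp, j₀, hPeq, hheadV, hsufP⟩ := hcutP
  rw [hP] at hPeq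
  obtain ⟨g1, g2⟩ := List.append_inj' hPeq rfl
  injection g2 with g3
  subst g1
  subst g3
  obtain ⟨Q', qq, k₀, hQeq, hheadW, hsufQ⟩ := hcutQ
  rw [hQ] at hQeq
  obtain ⟨g4, g5⟩ := List.append_inj' hQeq rfl
  injection g5 with g6
  subst g4
  subst g6
  -- nonemptiness and head decompositions
  have hV₁ne : V₁ ≠ [] := by
    intro hnil; rw [hnil] at hheadV; simp at hheadV
  have hW₁ne : W₁ ≠ [] := by
    intro hnil; rw [hnil] at hheadW; simp at hheadW
  obtain ⟨V₂, hV₂⟩ : ∃ V₂, V₁ = p₂ :: V₂ := by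
    cases V₁ with
    | nil => simp at hheadV
    | cons a l =>
      simp at hheadV
      exact ⟨l, by rw [hheadV]⟩
  obtain ⟨W₂, hW₂⟩ : ∃ W₂, W₁ = q₂ :: W₂ := by
    cases W₁ with
    | nil => simp at hheadW
    | cons a l =>
      simp at hheadW
      exact ⟨l, by rw [hheadW]⟩
  have hfrV₁ : FreelyReduced V₁ := hV.2 V₁ hV₁
  have hfrW₁ : FreelyReduced W₁ := hW.2 W₁ hW₁
  -- last-letter facts
  set x₂ := X.getLast hX with hx₂def
  have hXlast : X.getLast? = some x₂ := List.getLast?_eq_getLast hX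
  have hlastV : V₁.getLast? = some x₂ := by
    have hj₀ : j₀ ≠ 0 := by
      rintro rfl
      rw [wpow_zero] at hsufP
      have := List.eq_nil_of_suffix_nil hsufP
      simp at this
    obtain ⟨j₁, rfl⟩ := Nat.exists_eq_succ_of_ne_zero hj₀
    obtain ⟨C, hC⟩ := hsufP
    have h1 : (wpow V₁ (j₁+1)).getLast? = X.getLast? := by
      rw [← hC, List.getLast?_append_of_ne_nil _ (by simp),
        show p₁ :: X = [p₁] ++ X from rfl, List.getLast?_append_of_ne_nil _ hX]
    rw [wpow_succ', List.getLast?_append_of_ne_nil _ hV₁ne] at h1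
    rw [h1, hXlast]
  have hlastW : W₁.getLast? = some x₂ := by
    have hk₀ : k₀ ≠ 0 := by
      rintro rfl
      rw [wpow_zero] at hsufQ
      have := List.eq_nil_of_suffix_nil hsufQ
      simp at this
    obtain ⟨k₁, rfl⟩ := Nat.exists_eq_succ_of_ne_zero hk₀
    obtain ⟨C, hC⟩ := hsufQ
    have h1 : (wpow W₁ (k₁+1)).getLast? = X.getLast? := by
      rw [← hC, List.getLast?_append_of_ne_nil _ (by simp),
        show q₁ :: X = [q₁] ++ X from rfl, List.getLast?_append_of_ne_nil _ hX]
    rw [wpow_succ', List.getLast?_append_of_ne_nil _ hW₁ne] at h1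
    rw [h1, hXlast]
  -- chain decompositions of P and Q
  have hgl : (p₁ :: X).getLast? = some x₂ := by
    rw [show p₁ :: X = [p₁] ++ X from rfl, List.getLast?_append_of_ne_nil _ hX, hXlast]
  have hglq : (q₁ :: X).getLast? = some x₂ := by
    rw [show q₁ :: X = [q₁] ++ X from rfl, List.getLast?_append_of_ne_nil _ hX, hXlast]
  have hPsplit := List.isChain_append.mp
    (show List.Chain' (fun a b => b ≠ Letter.bar a) ((p₁ :: X) ++ [p₂]) from hfrP)
  have hQsplit := List.isChain_append.mp
    (show List.Chain' (fun a b => b ≠ Letter.bar a) ((q₁ :: X) ++ [q₂]) from hfrQ)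
  have hchP1 := hPsplit.1
  have hchQ1 := hQsplit.1
  have hRp : p₂ ≠ Letter.bar x₂ := hPsplit.2.2 x₂ (by simp [hgl]) p₂ (by simp)
  have hRq : q₂ ≠ Letter.bar x₂ := hQsplit.2.2 x₂ (by simp [hglq]) q₂ (by simp)
  -- freely reduced new words
  have hfrP₁ : FreelyReduced (p₁ :: (X ++ W₁) ++ [p₂]) :=
    fr_build hX hW₁ne hchP1 hfrW₁ hXlast hlastW hheadW hRq hRp
  have hfrQ₁ : FreelyReduced (q₁ :: (X ++ W₁) ++ [q₂]) :=
    fr_build hX hW₁ne hchQ1 hfrW₁ hXlast hlastW hheadW hRq hRq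
  have hfrP₂ : FreelyReduced (p₁ :: (X ++ V₁) ++ [p₂]) :=
    fr_build hX hV₁ne hchP1 hfrV₁ hXlast hlastV hheadV hRp hRp
  have hfrQ₂ : FreelyReduced (q₁ :: (X ++ V₁) ++ [q₂]) :=
    fr_build hX hV₁ne hchQ1 hfrV₁ hXlast hlastV hheadV hRp hRq
  -- type-2 linkedness of the new pairs
  have hXhead : ∀ (M : Word n), (X ++ M).head? = X.head? := by
    intro M
    cases X with
    | nil => exact absurd rfl hX
    | cons a X' => rfl
  have hlt2W : LinkedType2 𝒪 (p₁ :: (X ++ W₁) ++ [p₂]) (q₁ :: (X ++ W₁) ++ [q₂]) := by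
    refine ⟨p₁, p₂, q₁, q₂, X ++ W₁, by simp [hX], rfl, rfl, hne1, hne2, ?_⟩
    intro y₁ y₂ hh hl
    rw [hXhead] at hh
    rw [List.getLast?_append_of_ne_nil _ hW₁ne, hlastW] at hl
    injection hl with hl
    apply ho y₁ y₂ hh
    rw [hXlast, hl]
  have hlt2V : LinkedType2 𝒪 (p₁ :: (X ++ V₁) ++ [p₂]) (q₁ :: (X ++ V₁) ++ [q₂]) := by
    refine ⟨p₁, p₂, q₁, q₂, X ++ V₁, by simp [hX], rfl, rfl, hne1, hne2, ?_⟩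
    intro y₁ y₂ hh hl
    rw [hXhead] at hh
    rw [List.getLast?_append_of_ne_nil _ hV₁ne, hlastV] at hl
    injection hl with hl
    apply ho y₁ y₂ hh
    rw [hXlast, hl]
  -- suffix facts
  have hXV : X <:+ wpow V₁ j₀ := List.IsSuffix.trans (⟨[p₁], rfl⟩ : X <:+ p₁ :: X) hsufP
  have hXW : X <:+ wpow W₁ k₀ := List.IsSuffix.trans (⟨[q₁], rfl⟩ : X <:+ q₁ :: X) hsufQ
  have wrap1 : ∃ t, (p₁ :: X) <:+ wpow (V₁ ++ W₁) t ++ V₁ := by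
    by_cases hle : (p₁ :: X).length ≤ V₁.length
    · exact ⟨0, by simpa [wpow] using suffix_of_small hsufP hle⟩
    · push_neg at hle
      obtain ⟨heq, hdropV⟩ := peel hV₁ne hsufP hle.le
      have hTX : (p₁ :: X).drop V₁.length <:+ X := by
        apply suffix_of_suffix_length_le (List.drop_suffix _ _) (⟨[p₁], rfl⟩ : X <:+ p₁ :: X)
        rw [List.length_drop]
        have : 0 < V₁.length := List.length_pos_iff.mpr hV₁ne
        simp
        omega
      have hTW : (p₁ :: X).drop V₁.length <:+ wpow W₁ k₀ := hTX.trans hXW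
      obtain ⟨-, t, ht⟩ := key hV₁ne hW₁ne _ ((p₁ :: X).drop V₁.length) le_rfl hdropV hTW
      refine ⟨t, ?_⟩
      rw [← heq]
      obtain ⟨C, hC⟩ := ht
      exact ⟨C, by rw [← List.append_assoc, hC]⟩
  have wrap2 : ∃ t, (q₁ :: X) <:+ wpow (V₁ ++ W₁) t := by
    by_cases hle : (q₁ :: X).length ≤ W₁.length
    · exact ⟨1, (suffix_of_small hsufQ hle).trans ⟨V₁, by simp [wpow]⟩⟩
    · push_neg at hle
      obtain ⟨heq, hdropW⟩ := peel hW₁ne hsufQ hle.le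
      have hTX : (q₁ :: X).drop W₁.length <:+ X := by
        apply suffix_of_suffix_length_le (List.drop_suffix _ _) (⟨[q₁], rfl⟩ : X <:+ q₁ :: X)
        rw [List.length_drop]
        have : 0 < W₁.length := List.length_pos_iff.mpr hW₁ne
        simp
        omega
      have hTV : (q₁ :: X).drop W₁.length <:+ wpow V₁ j₀ := hTX.trans hXV
      obtain ⟨⟨t, ht⟩, -⟩ := key hV₁ne hW₁ne _ ((q₁ :: X).drop W₁.length) le_rfl hTV hdropW
      refine ⟨t+1, ?_⟩
      rw [← heq, wpow_succ']
      obtain ⟨C, hC⟩ := ht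
      refine ⟨C, ?_⟩
      rw [show wpow (V₁++W₁) t ++ (V₁ ++ W₁) = (wpow (V₁++W₁) t ++ V₁) ++ W₁ by
        simp [List.append_assoc], ← hC]
      simp [List.append_assoc]
  -- infix facts
  obtain ⟨t₁, ht₁⟩ := wrap1
  have hinfP₁ : (p₁ :: (X ++ W₁) ++ [p₂]) <:+: wpow (V₁ ++ W₁) (t₁ + 2) := by
    obtain ⟨C, hC⟩ := ht₁
    refine ⟨C, V₂ ++ W₁, ?_⟩
    have he : wpow (V₁++W₁) (t₁+2)
        = ((wpow (V₁++W₁) t₁ ++ V₁) ++ W₁) ++ ((p₂ :: V₂) ++ W₁) := by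
      rw [show t₁ + 2 = (t₁ + 1) + 1 from rfl, wpow_succ', wpow_succ', ← hV₂]
      simp [List.append_assoc]
    rw [he, ← hC]
    simp [List.append_assoc]
  obtain ⟨t₂, ht₂⟩ := wrap2
  have hinfQ₂ : (q₁ :: (X ++ V₁) ++ [q₂]) <:+: wpow (V₁ ++ W₁) (t₂ + 1) := by
    obtain ⟨C, hC⟩ := ht₂
    refine ⟨C, W₂, ?_⟩
    have he : wpow (V₁++W₁) (t₂+1) = wpow (V₁++W₁) t₂ ++ (V₁ ++ (q₂ :: W₂)) := by
      rw [wpow_succ', ← hW₂]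
    rw [he, ← hC]
    simp [List.append_assoc]
  have hinfQ₁ : (q₁ :: (X ++ W₁) ++ [q₂]) <:+: wpow W₁ (k₀ + 2) := by
    obtain ⟨C, hC⟩ := hsufQ
    refine ⟨C, W₂, ?_⟩
    have he : wpow W₁ (k₀+2) = (wpow W₁ k₀ ++ W₁) ++ (q₂ :: W₂) := by
      rw [show k₀ + 2 = (k₀ + 1) + 1 from rfl, wpow_succ', wpow_succ', ← hW₂]
    rw [he, ← hC]
    simp [List.append_assoc]
  have hinfP₂ : (p₁ :: (X ++ V₁) ++ [p₂]) <:+: wpow V₁ (j₀ + 2) := by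
    obtain ⟨C, hC⟩ := hsufP
    refine ⟨C, V₂, ?_⟩
    have he : wpow V₁ (j₀+2) = (wpow V₁ j₀ ++ V₁) ++ (p₂ :: V₂) := by
      rw [show j₀ + 2 = (j₀ + 1) + 1 from rfl, wpow_succ', wpow_succ', ← hV₂]
    rw [he, ← hC]
    simp [List.append_assoc]
  -- windows
  have hVWne : V₁ ++ W₁ ≠ [] := by simp [hV₁ne]
  obtain ⟨k1, hk1pos, hsub1, hk1a, hk1b⟩ :=
    subword_pow_window hVWne (by simp) hinfP₁
  obtain ⟨k2, hk2pos, hsub2, hk2a, hk2b⟩ :=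
    subword_pow_window hW₁ne (by simp) hinfQ₁
  obtain ⟨k3, hk3pos, hsub3, hk3a, hk3b⟩ :=
    subword_pow_window hV₁ne (by simp) hinfP₂
  obtain ⟨k4, hk4pos, hsub4, hk4a, hk4b⟩ :=
    subword_pow_window hVWne (by simp) hinfQ₂
  have hclenG : clen (cyc (V₁ ++ W₁)) = (V₁ ++ W₁).length := Cycle.length_coe _
  have hclenV : clen 𝒱 = V₁.length := by rw [← hV₁]; exact Cycle.length_coe _
  have hclenW : clen 𝒲 = W₁.length := by rw [← hW₁]; exact Cycle.length_coe _
  constructor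
  · refine ⟨⟨hfrP₁, hfrQ₁, by simp; omega, by simp; omega, Or.inr (Or.inl hlt2W)⟩,
      k1, k2, hk1pos, hk2pos, hsub1, ?_, ?_, ?_, ?_, ?_⟩
    · rw [hW₁] at hsub2
      exact hsub2
    · rw [hclenG]; exact hk1a
    · rw [hclenG]; exact hk1b
    · rw [hclenW]; exact hk2a
    · rw [hclenW]; exact hk2b
  · refine ⟨⟨hfrP₂, hfrQ₂, by simp; omega, by simp; omega, Or.inr (Or.inl hlt2V)⟩,
      k3, k4, hk3pos, hk4pos, ?_, hsub4, ?_, ?_, ?_, ?_⟩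
    · rw [hV₁] at hsub3
      exact hsub3
    · rw [hclenV]; exact hk3a
    · rw [hclenV]; exact hk3b
    · rw [hclenG]; exact hk4a
    · rw [hclenG]; exact hk4b

end CyclicWords
end
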